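/- Unbiasedness of the RS+FD[OUE-z] estimator (Theorem 'est_oue_z'): let d ≥ 1 be an integer, p, q ∈ [0,1] with p ≠ q, and let n be a positive integer. Suppose that among the n users exactly f·n hold the value v (where 0 ≤ f ≤ 1 and f·n is an integer) and each user independently reports the bit corresponding to v as 1 with probability p/d + (d−1)·q/d if it holds v and with probability q otherwise. Then the estimator f̂ = d·(N − n·q)/(n·(p−q)), where N is the number of users reporting bit 1 for v, satisfies E[f̂] = f. -/

import Mathlib

open MeasureTheory ProbabilityTheory

/-- Unbiasedness of the RS+FD[OUE-z] estimator (Theorem `est_oue_z`). -/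
theorem est_oue_z
    {Ω : Type*} [MeasureSpace Ω] [IsProbabilityMeasure (ℙ : Measure Ω)]
    (d : ℕ) (hd : 1 ≤ d)
    (p q : ℝ) (hp : 0 ≤ p ∧ p ≤ 1) (hq : 0 ≤ q ∧ q ≤ 1) (hpq : p ≠ q)
    (n : ℕ) (hn : 0 < n)
    (f : ℝ) (hf0 : 0 ≤ f) (hf1 : f ≤ 1)
    (holds : Fin n → Bool)
    (hcount : (∑ i, if holds i then (1 : ℝ) else 0) = f * n)
    (report : Fin n → Ω → Bool)
    (hmeas : ∀ i, Measurable (report i))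
    (hindep : iIndepFun report ℙ)
    (hps : ∀ i, holds i = true →
      ℙ {ω | report i ω = true}
        = ENNReal.ofReal (p / (d : ℝ) + ((d : ℝ) - 1) * q / (d : ℝ)))
    (hqs : ∀ i, holds i = false →
      ℙ {ω | report i ω = true} = ENNReal.ofReal q) :
    ∫ ω, (d : ℝ) * ((∑ i, if report i ω then (1 : ℝ) else 0) - (n : ℝ) * q)
        / ((n : ℝ) * (p - q)) ∂ℙ = f := by
  have hd' : (0:ℝ) < d := by exact_mod_cast hd
  have hn' : (0:ℝ) < n := by exact_mod_cast hn
  set P : ℝ := p / (d : ℝ) + ((d : ℝ) - 1) * q / (d : ℝ) with hP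
  have hPnn : 0 ≤ P := by
    have h1' : (1:ℝ) ≤ (d:ℝ) := by exact_mod_cast hd
    have h1 : (0:ℝ) ≤ (d:ℝ) - 1 := by linarith
    have := hp.1; have := hq.1
    positivity
  have hsmeas : ∀ i, MeasurableSet {ω | report i ω = true} := fun i =>
    (hmeas i) (MeasurableSet.singleton true)
  have hgint : ∀ i : Fin n,
      Integrable (fun ω => if report i ω then (1:ℝ) else 0) ℙ := by
    intro i
    have : (fun ω => if report i ω then (1:ℝ) else 0)
        = Set.indicator {ω | report i ω = true} (fun _ => (1:ℝ)) := by
      funext ω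
      by_cases h : report i ω = true <;> simp [Set.indicator, h]
    rw [this]
    exact (integrable_const (1:ℝ)).indicator (hsmeas i)
  have hgval : ∀ i : Fin n,
      ∫ ω, (if report i ω then (1:ℝ) else 0) ∂ℙ
        = if holds i then P else q := by
    intro i
    have hrw : (fun ω => if report i ω then (1:ℝ) else 0)
        = Set.indicator {ω | report i ω = true} (fun _ => (1:ℝ)) := by
      funext ω
      by_cases h : report i ω = true <;> simp [Set.indicator, h]
    rw [hrw, integral_indicator_const (1:ℝ) (hsmeas i), smul_eq_mul, mul_one]
    by_cases h : holds i
    · rw [measureReal_def, hps i h, if_pos h, ENNReal.toReal_ofReal hPnn]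
    · rw [measureReal_def, hqs i (by simpa using h), if_neg h, ENNReal.toReal_ofReal hq.1]
  have hSint : Integrable (fun ω => ∑ i, if report i ω then (1:ℝ) else 0) ℙ :=
    integrable_finset_sum _ (fun i _ => hgint i)
  have hES : ∫ ω, (∑ i, if report i ω then (1:ℝ) else 0) ∂ℙ
      = f * n * (P - q) + n * q := by
    rw [integral_finset_sum _ (fun i _ => hgint i)]
    have : ∀ i : Fin n, (if holds i then P else q)
        = (if holds i then (1:ℝ) else 0) * (P - q) + q := by
      intro i; by_cases h : holds i <;> simp [h] <;> ring
    simp_rw [hgval, this]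
    rw [Finset.sum_add_distrib, ← Finset.sum_mul, hcount]
    simp [mul_comm]
  have hrw2 : (fun ω => (d : ℝ) * ((∑ i, if report i ω then (1 : ℝ) else 0) - (n : ℝ) * q)
        / ((n : ℝ) * (p - q)))
      = fun ω => ((d : ℝ) / ((n : ℝ) * (p - q))) *
          ((∑ i, if report i ω then (1 : ℝ) else 0) - (n : ℝ) * q) := by
    funext ω; ring
  rw [hrw2, integral_const_mul, integral_sub hSint (integrable_const _), hES,
    integral_const]
  have hPq : P - q = (p - q) / d := by
    rw [hP]
    field_simp
    ring
  have hpq' : p - q ≠ 0 := sub_ne_zero.mpr hpq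
  simp only [measure_univ, probReal_univ, ENNReal.toReal_one, smul_eq_mul, one_mul]
  rw [hPq]
  field_simp
  ring
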